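/- For all natural numbers n ≥ 16 and i ≥ 7, f_i(16n²) ≤ f_i^{(2)}(n), where f_i^{(2)} denotes the two-fold iterate of f_i. -/

import Mathlib

/-- `f i` for `i ≥ 1`: `f 1 n = n + 1`, `f (i+1) n = (f i)^[⌊√n/2⌋] n`. -/
def f : ℕ → ℕ → ℕ
  | 0, n => n
  | 1, n => n + 1
  | i + 2, n => (f (i + 1))^[Nat.sqrt n / 2] n

lemma f_succ (i n : ℕ) (hi : 1 ≤ i) : f (i + 1) n = (f i)^[Nat.sqrt n / 2] n := by
  obtain ⟨j, rfl⟩ := Nat.exists_eq_add_of_le' hi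
  rfl

lemma le_iter {g : ℕ → ℕ} (hg : ∀ x, x ≤ g x) (k n : ℕ) : n ≤ g^[k] n := by
  induction k with
  | zero => simp
  | succ k ih => rw [Function.iterate_succ_apply']; exact le_trans ih (hg _)

lemma iter_le_iter {g : ℕ → ℕ} (hg : ∀ x, x ≤ g x) {j k : ℕ} (h : j ≤ k) (n : ℕ) :
    g^[j] n ≤ g^[k] n := by
  obtain ⟨d, rfl⟩ := Nat.exists_eq_add_of_le h
  rw [Nat.add_comm, Function.iterate_add_apply]
  exact le_iter hg d _

lemma fA : ∀ i n, n ≤ f i n := by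
  intro i
  induction i with
  | zero => intro n; simp [f]
  | succ i ih =>
    intro n
    cases i with
    | zero => simp [f]
    | succ j => exact le_iter ih _ n

lemma fB : ∀ i, Monotone (f i) := by
  intro i
  induction i with
  | zero => exact fun a b h => by simpa [f] using h
  | succ i ih =>
    cases i with
    | zero => exact fun a b h => by simpa [f] using h
    | succ j =>
      intro a b hab
      show (f (j+1))^[Nat.sqrt a / 2] a ≤ (f (j+1))^[Nat.sqrt b / 2] b
      calc (f (j+1))^[Nat.sqrt a / 2] a ≤ (f (j+1))^[Nat.sqrt a / 2] b := ih.iterate _ hab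
        _ ≤ (f (j+1))^[Nat.sqrt b / 2] b :=
          iter_le_iter (fA (j+1)) (Nat.div_le_div_right (Nat.sqrt_le_sqrt hab)) b

lemma f1_iter (k n : ℕ) : (f 1)^[k] n = n + k := by
  induction k with
  | zero => simp
  | succ k ih => rw [Function.iterate_succ_apply', ih]; rfl

lemma f2_eq (n : ℕ) : f 2 n = n + Nat.sqrt n / 2 := by
  show (f 1)^[Nat.sqrt n / 2] n = _
  exact f1_iter _ _

lemma fD_aux (n : ℕ) : ∀ j, n + j * (Nat.sqrt n / 2) ≤ (f 2)^[j] n := by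
  intro j
  induction j with
  | zero => simp
  | succ j ih =>
    rw [Function.iterate_succ_apply']
    set y := (f 2)^[j] n with hy
    have hny : n ≤ y := le_iter (fA 2) j n
    have hs : Nat.sqrt n / 2 ≤ Nat.sqrt y / 2 :=
      Nat.div_le_div_right (Nat.sqrt_le_sqrt hny)
    have hmul : (j + 1) * (Nat.sqrt n / 2) = j * (Nat.sqrt n / 2) + Nat.sqrt n / 2 := by ring
    have := f2_eq y
    omega

lemma fD (n : ℕ) : n + (Nat.sqrt n / 2) ^ 2 ≤ f 3 n := by
  have := fD_aux n (Nat.sqrt n / 2)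
  show n + _ ≤ (f 2)^[Nat.sqrt n / 2] n
  nlinarith [this]

lemma fE_aux (n : ℕ) : ∀ j, n + j * (Nat.sqrt n / 2) ^ 2 ≤ (f 3)^[j] n := by
  intro j
  induction j with
  | zero => simp
  | succ j ih =>
    rw [Function.iterate_succ_apply']
    set y := (f 3)^[j] n with hy
    have hny : n ≤ y := le_iter (fA 3) j n
    have hs : (Nat.sqrt n / 2) ^ 2 ≤ (Nat.sqrt y / 2) ^ 2 :=
      Nat.pow_le_pow_left (Nat.div_le_div_right (Nat.sqrt_le_sqrt hny)) 2
    have hmul : (j + 1) * (Nat.sqrt n / 2) ^ 2 = j * (Nat.sqrt n / 2) ^ 2 + (Nat.sqrt n / 2) ^ 2 := by ring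
    have := fD y
    omega

lemma fE (n : ℕ) : n + (Nat.sqrt n / 2) ^ 3 ≤ f 4 n := by
  have := fE_aux n (Nat.sqrt n / 2)
  show n + _ ≤ (f 3)^[Nat.sqrt n / 2] n
  nlinarith [this]

lemma arith1 (n : ℕ) (h : 256 ≤ n) : n ≤ (Nat.sqrt n / 2) ^ 3 := by
  set s := Nat.sqrt n with hsdef
  have hs : 16 ≤ s := Nat.le_sqrt.2 (by omega)
  have h1 : n < (s + 1) * (s + 1) := Nat.lt_succ_sqrt n
  set k := s / 2 with hk
  have h2 : s ≤ 2 * k + 1 := by omega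
  have h3 : 8 ≤ k := by omega
  have h4 : n ≤ 4 * k ^ 2 + 8 * k + 3 := by nlinarith
  have h5 : 8 * k + 3 ≤ 4 * k ^ 2 := by nlinarith
  have h6 : 8 * k ^ 2 ≤ k ^ 3 := by nlinarith
  omega

lemma fF (n : ℕ) (h : 256 ≤ n) : 2 * n ≤ f 4 n := by
  have h1 := fE n
  have h2 := arith1 n h
  omega

lemma fG_aux (n : ℕ) (h : 256 ≤ n) : ∀ j, 2 ^ j * n ≤ (f 4)^[j] n := by
  intro j
  induction j with
  | zero => simp
  | succ j ih =>
    rw [Function.iterate_succ_apply']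
    set y := (f 4)^[j] n with hy
    have hny : n ≤ y := le_iter (fA 4) j n
    have := fF y (by omega)
    calc 2 ^ (j + 1) * n = 2 * (2 ^ j * n) := by ring
      _ ≤ 2 * y := by omega
      _ ≤ f 4 y := this

lemma fG (n : ℕ) (h : 256 ≤ n) : 2 ^ (Nat.sqrt n / 2) * n ≤ f 5 n := by
  show _ ≤ (f 4)^[Nat.sqrt n / 2] n
  exact fG_aux n h _

lemma fH (n : ℕ) (h : 256 ≤ n) : 16 * n ^ 2 ≤ f 6 n := by
  set s := Nat.sqrt n with hsdef
  have hs : 16 ≤ s := Nat.le_sqrt.2 (by omega)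
  have hk : 8 ≤ s / 2 := by omega
  have step1 : (f 5)^[2] n ≤ f 6 n := by
    show _ ≤ (f 5)^[s / 2] n
    exact iter_le_iter (fA 5) (by omega) n
  set m := f 5 n with hm
  have hmn : 2 ^ (s / 2) * n ≤ m := fG n h
  have h256 : (256 : ℕ) ≤ 2 ^ (s / 2) :=
    calc (256 : ℕ) = 2 ^ 8 := by norm_num
      _ ≤ 2 ^ (s / 2) := Nat.pow_le_pow_right (by norm_num) hk
  have hm256n : 256 * n ≤ m := le_trans (Nat.mul_le_mul_right n h256) hmn
  have hm256 : 256 ≤ m := le_trans (by omega) hm256n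
  have hsn : s ^ 2 ≤ n := Nat.sqrt_le' n
  have hsm : 16 * s ≤ Nat.sqrt m := Nat.le_sqrt.2 (by nlinarith)
  have hkm : 8 * s ≤ Nat.sqrt m / 2 := by omega
  have hbig : 16 * n ≤ 2 ^ (8 * s) := by
    have h1 : s + 1 ≤ 2 ^ s := Nat.lt_two_pow_self (n := s)
    have h2 : n ≤ 2 ^ s * 2 ^ s := by
      have h3 := Nat.lt_succ_sqrt n
      calc n ≤ (s + 1) * (s + 1) := le_of_lt h3
        _ ≤ 2 ^ s * 2 ^ s := Nat.mul_le_mul h1 h1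
    calc 16 * n ≤ 2 ^ 4 * (2 ^ s * 2 ^ s) := by omega
      _ = 2 ^ (2 * s + 4) := by ring
      _ ≤ 2 ^ (8 * s) := Nat.pow_le_pow_right (by norm_num) (by omega)
  have hfin : 16 * n ^ 2 ≤ f 5 m := by
    have := fG m hm256
    have hnm : n ≤ m := by omega
    calc 16 * n ^ 2 = (16 * n) * n := by ring
      _ ≤ 2 ^ (8 * s) * m := Nat.mul_le_mul hbig hnm
      _ ≤ 2 ^ (Nat.sqrt m / 2) * m :=
        Nat.mul_le_mul_right m (Nat.pow_le_pow_right (by norm_num) hkm)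
      _ ≤ f 5 m := this
  calc 16 * n ^ 2 ≤ f 5 m := hfin
    _ = (f 5)^[2] n := by rw [hm]; rfl
    _ ≤ f 6 n := step1

lemma f_ge_one_apply (i n : ℕ) (hi : 1 ≤ i) (hn : 16 ≤ n) : f i n ≤ f (i + 1) n := by
  rw [f_succ i n hi]
  have h4 : 4 ≤ Nat.sqrt n := Nat.le_sqrt.2 (by omega)
  calc f i n = (f i)^[1] n := rfl
    _ ≤ (f i)^[Nat.sqrt n / 2] n := iter_le_iter (fA i) (by omega) n

lemma f_ge_two_apply (i n : ℕ) (hi : 1 ≤ i) (hn : 16 ≤ n) : f i (f i n) ≤ f (i + 1) n := by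
  rw [f_succ i n hi]
  have h4 : 4 ≤ Nat.sqrt n := Nat.le_sqrt.2 (by omega)
  calc f i (f i n) = (f i)^[2] n := rfl
    _ ≤ (f i)^[Nat.sqrt n / 2] n := iter_le_iter (fA i) (by omega) n

lemma sqrt_eval (m n : ℕ) (h1 : m * m ≤ n) (h2 : n < (m + 1) * (m + 1)) : Nat.sqrt n = m :=
  le_antisymm (Nat.lt_succ_iff.1 (Nat.sqrt_lt.2 h2)) (Nat.le_sqrt.2 h1)

lemma f7_16 : 2 ^ 26 ≤ f 7 16 := by
  have e16 : Nat.sqrt 16 = 4 := sqrt_eval 4 16 (by norm_num) (by norm_num)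
  have e24 : Nat.sqrt 24 = 4 := sqrt_eval 4 24 (by norm_num) (by norm_num)
  have e32 : Nat.sqrt 32 = 5 := sqrt_eval 5 32 (by norm_num) (by norm_num)
  have e40 : Nat.sqrt 40 = 6 := sqrt_eval 6 40 (by norm_num) (by norm_num)
  have e67 : Nat.sqrt 67 = 8 := sqrt_eval 8 67 (by norm_num) (by norm_num)
  have e131 : Nat.sqrt 131 = 11 := sqrt_eval 11 131 (by norm_num) (by norm_num)
  have e1024 : Nat.sqrt 1024 = 32 := sqrt_eval 32 1024 (by norm_num) (by norm_num)
  have h416 : 24 ≤ f 4 16 := by have := fE 16; rw [e16] at this; norm_num at this; omega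
  have h424 : 32 ≤ f 4 24 := by have := fE 24; rw [e24] at this; norm_num at this; omega
  have h432 : 40 ≤ f 4 32 := by have := fE 32; rw [e32] at this; norm_num at this; omega
  have h440 : 67 ≤ f 4 40 := by have := fE 40; rw [e40] at this; norm_num at this; omega
  have h467 : 131 ≤ f 4 67 := by have := fE 67; rw [e67] at this; norm_num at this; omega
  have h4131 : 256 ≤ f 4 131 := by have := fE 131; rw [e131] at this; norm_num at this; omega
  have h516 : 32 ≤ f 5 16 :=
    le_trans (le_trans h424 (fB 4 h416)) (f_ge_two_apply 4 16 (by norm_num) (by norm_num))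
  have h532 : 67 ≤ f 5 32 :=
    le_trans (le_trans h440 (fB 4 h432)) (f_ge_two_apply 4 32 (by norm_num) (by norm_num))
  have h616 : 67 ≤ f 6 16 :=
    le_trans (le_trans h532 (fB 5 h516)) (f_ge_two_apply 5 16 (by norm_num) (by norm_num))
  have h567 : 1024 ≤ f 5 67 := by
    have heq : f 5 67 = (f 4)^[4] 67 := by
      rw [f_succ 4 67 (by norm_num), e67]
    have hit : (f 4)^[4] 67 = f 4 (f 4 (f 4 (f 4 67))) := by
      norm_num [Function.iterate_succ_apply', -Function.iterate_succ]
    have s1 : 256 ≤ f 4 (f 4 67) := le_trans h4131 (fB 4 h467)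
    have s2 : 512 ≤ f 4 (f 4 (f 4 67)) := by
      have hmono := fB 4 s1
      have := fF 256 (by norm_num)
      omega
    have s3 : 1024 ≤ f 4 (f 4 (f 4 (f 4 67))) := by
      have hmono := fB 4 s2
      have := fF 512 (by norm_num)
      omega
    rw [heq, hit]; exact s3
  have h51024 : 2 ^ 26 ≤ f 5 1024 := by
    have hg := fG 1024 (by norm_num)
    rw [e1024] at hg
    calc (2 : ℕ) ^ 26 = 2 ^ (32 / 2) * 1024 := by norm_num
      _ ≤ f 5 1024 := hg
  have h667 : 2 ^ 26 ≤ f 6 67 :=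
    le_trans (le_trans h51024 (fB 5 h567)) (f_ge_two_apply 5 67 (by norm_num) (by norm_num))
  exact le_trans (le_trans h667 (fB 6 h616)) (f_ge_two_apply 6 16 (by norm_num) (by norm_num))

lemma growth : ∀ i, 7 ≤ i → ∀ n, 16 ≤ n → 16 * n ^ 2 ≤ f i n := by
  intro i hi
  induction i, hi using Nat.le_induction with
  | base =>
    intro n hn
    by_cases h : 256 ≤ n
    · exact le_trans (fH n h) (f_ge_one_apply 6 n (by norm_num) hn)
    · push_neg at h
      have h1 : f 7 16 ≤ f 7 n := fB 7 hn
      have h2 := f7_16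
      have h3 : n ^ 2 ≤ 255 ^ 2 := Nat.pow_le_pow_left (by omega) 2
      norm_num at h2 h3
      omega
  | succ i hi ih =>
    intro n hn
    exact le_trans (ih n hn) (f_ge_one_apply i n (by omega) hn)

theorem f_sixteen_sq_le_iterate (n i : ℕ) (hn : 16 ≤ n) (hi : 7 ≤ i) :
    f i (16 * n ^ 2) ≤ (f i)^[2] n := by
  have hg := growth i hi n hn
  calc f i (16 * n ^ 2) ≤ f i (f i n) := fB i hg
    _ = (f i)^[2] n := rfl
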